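/- (Robustness of the one-step functional to the missingness propensity.) In the capture-recapture setup, assume MAR and positivity, and let π̄(y,v) > 0 be an arbitrary candidate missingness propensity. Take the candidate conditional probabilities equal to the truth: q̄_y(v,x) = q_y(v,x) and q̄_y(v) = q_y(v) for all y ≠ 0 and all (v,x) in the support. With 1/γ(v,x) = 1 + Π_{y ≠ 0} q_y(v,x)^{(−1)^{|y|+1}}, m(v) = E_Q[ 1/γ(V,X) − 1 | V=v ], and φ̃(z) = Σ_{y' ≠ 0} (−1)^{1+|y'|} { (r·1(y=y') / π̄(y',v)) · [ (1/q_{y'}(v,x))(1/γ(v,x) − 1) − (1/q_{y'}(v)) m(v) ] + (1(y=y')/q_{y'}(v)) m(v) } for z = (y,v,x,r) with y ≠ 0, it holds that E_Q[ φ̃(Y,V,X,R) ] = E_Q[ 1/γ(V,X) − 1 ], i.e., the remainder vanishes regardless of the choice of π̄. -/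

import Mathlib

open scoped Classical
open Finset

/-- Probability `P(A)` of an event `A` under a probability weight `w` on a finite
outcome space `Ω`. -/
noncomputable def pr {Ω : Type*} [Fintype Ω] (w : Ω → ℝ) (A : Ω → Prop) : ℝ :=
  ∑ ω, if A ω then w ω else 0

/-- Conditional probability `P(A | B)` under the weight `w`. -/
noncomputable def cpr {Ω : Type*} [Fintype Ω] (w : Ω → ℝ) (A B : Ω → Prop) : ℝ :=
  pr w (fun ω => A ω ∧ B ω) / pr w B

/-- Conditional expectation `E[f | B]` under the weight `w`. -/
noncomputable def cexp {Ω : Type*} [Fintype Ω] (w : Ω → ℝ) (f : Ω → ℝ) (B : Ω → Prop) : ℝ :=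
  (∑ ω, if B ω then w ω * f ω else 0) / pr w B

/-- Full conditional q-probability `q_y(v,x) = Q(Y = y | V = v, X = x)`, where `Q` is the
law of the data conditional on capture (`Y ≠ 0`). -/
noncomputable def qfull {Ω 𝒱 𝒳 : Type*} [Fintype Ω] {K : ℕ}
    (w : Ω → ℝ) (Y : Ω → Finset (Fin K)) (V : Ω → 𝒱) (X : Ω → 𝒳)
    (y : Finset (Fin K)) (v : 𝒱) (x : 𝒳) : ℝ :=
  cpr w (fun ω => Y ω = y) (fun ω => V ω = v ∧ X ω = x ∧ Y ω ≠ ∅)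

/-- `V`-only conditional q-probability `q_y(v) = Q(Y = y | V = v)`. -/
noncomputable def qV {Ω 𝒱 : Type*} [Fintype Ω] {K : ℕ}
    (w : Ω → ℝ) (Y : Ω → Finset (Fin K)) (V : Ω → 𝒱)
    (y : Finset (Fin K)) (v : 𝒱) : ℝ :=
  cpr w (fun ω => Y ω = y) (fun ω => V ω = v ∧ Y ω ≠ ∅)

/-- Covariate distribution among the fully observed,
`λ_x(y,v) = Q(X = x | Y = y, V = v, R = 1)`. -/
noncomputable def lam {Ω 𝒱 𝒳 : Type*} [Fintype Ω] {K : ℕ}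
    (w : Ω → ℝ) (Y : Ω → Finset (Fin K)) (V : Ω → 𝒱) (X : Ω → 𝒳) (R : Ω → Bool)
    (x : 𝒳) (y : Finset (Fin K)) (v : 𝒱) : ℝ :=
  cpr w (fun ω => X ω = x) (fun ω => Y ω = y ∧ V ω = v ∧ R ω = true ∧ Y ω ≠ ∅)

/-- Missingness propensity score `π(y,v) = Q(R = 1 | Y = y, V = v)`. -/
noncomputable def piR {Ω 𝒱 : Type*} [Fintype Ω] {K : ℕ}
    (w : Ω → ℝ) (Y : Ω → Finset (Fin K)) (V : Ω → 𝒱) (R : Ω → Bool)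
    (y : Finset (Fin K)) (v : 𝒱) : ℝ :=
  cpr w (fun ω => R ω = true) (fun ω => Y ω = y ∧ V ω = v ∧ Y ω ≠ ∅)

/-- sum of `w * f` over the event `C`. -/
noncomputable def es {Ω : Type*} [Fintype Ω] (w : Ω → ℝ) (C : Ω → Prop) (f : Ω → ℝ) : ℝ :=
  ∑ ω, if C ω then w ω * f ω else 0

section Aux
variable {Ω : Type*} [Fintype Ω] {w : Ω → ℝ} {A B C D : Ω → Prop}

lemma pr_nonneg (hw0 : ∀ ω, 0 ≤ w ω) : 0 ≤ pr w A :=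
  Finset.sum_nonneg fun ω _ => by by_cases h : A ω <;> simp [h, hw0 ω]

lemma pr_congr (h : ∀ ω, A ω ↔ B ω) : pr w A = pr w B :=
  Finset.sum_congr rfl fun ω _ => by by_cases hh : A ω <;> simp [hh, (h ω).symm, h ω]

lemma pr_mono (hw0 : ∀ ω, 0 ≤ w ω) (h : ∀ ω, A ω → B ω) : pr w A ≤ pr w B :=
  Finset.sum_le_sum fun ω _ => by
    by_cases hA : A ω
    · simp [hA, h ω hA]
    · by_cases hB : B ω <;> simp [hA, hB, hw0 ω]

lemma pr_zero_of (hw0 : ∀ ω, 0 ≤ w ω) (hsub : ∀ ω, A ω → B ω) (h : pr w B = 0) :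
    pr w A = 0 :=
  le_antisymm (h ▸ pr_mono hw0 hsub) (pr_nonneg hw0)

lemma le_pr (hw0 : ∀ ω, 0 ≤ w ω) {ω : Ω} (hA : A ω) : w ω ≤ pr w A := by
  have := Finset.single_le_sum (f := fun ω => if A ω then w ω else 0)
    (fun i _ => by by_cases h : A i <;> simp [h, hw0 i]) (Finset.mem_univ ω)
  simpa [hA, pr] using this

lemma w_eq_zero (hw0 : ∀ ω, 0 ≤ w ω) (h : pr w C = 0) {ω : Ω} (hC : C ω) : w ω = 0 :=
  le_antisymm (h ▸ le_pr hw0 hC) (hw0 ω)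

lemma pr_and_eq (hw0 : ∀ ω, 0 ≤ w ω) :
    pr w (fun ω => A ω ∧ B ω) = cpr w A B * pr w B := by
  by_cases h : pr w B = 0
  · rw [h, mul_zero]
    exact pr_zero_of hw0 (fun ω hab => hab.2) h
  · unfold cpr; field_simp

lemma es_zero (hw0 : ∀ ω, 0 ≤ w ω) (h : pr w C = 0) (f : Ω → ℝ) : es w C f = 0 :=
  Finset.sum_eq_zero fun ω _ => by
    by_cases hC : C ω
    · simp [hC, w_eq_zero hw0 h hC]
    · simp [hC]

lemma es_ext (w : Ω → ℝ) {C D : Ω → Prop} {f g : Ω → ℝ}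
    (h : ∀ ω, w ω ≠ 0 → (if C ω then f ω else 0) = (if D ω then g ω else 0)) :
    es w C f = es w D g := by
  refine Finset.sum_congr rfl fun ω _ => ?_
  by_cases hw : w ω = 0
  · by_cases hC : C ω <;> by_cases hD : D ω <;> simp [hC, hD, hw]
  · have := h ω hw
    by_cases hC : C ω <;> by_cases hD : D ω <;> simp [hC, hD] at this ⊢ <;>
      simp [this]

lemma es_add (w : Ω → ℝ) (C : Ω → Prop) (f g : Ω → ℝ) :
    es w C (fun ω => f ω + g ω) = es w C f + es w C g := by
  unfold es
  rw [← Finset.sum_add_distrib]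
  exact Finset.sum_congr rfl fun ω _ => by by_cases h : C ω <;> simp [h, mul_add]

lemma es_smul (w : Ω → ℝ) (C : Ω → Prop) (s : ℝ) (f : Ω → ℝ) :
    es w C (fun ω => s * f ω) = s * es w C f := by
  unfold es
  rw [Finset.mul_sum]
  exact Finset.sum_congr rfl fun ω _ => by by_cases h : C ω <;> simp [h] <;> ring

lemma es_sub (w : Ω → ℝ) (C : Ω → Prop) (f g : Ω → ℝ) :
    es w C (fun ω => f ω - g ω) = es w C f - es w C g := by
  unfold es
  rw [← Finset.sum_sub_distrib]
  exact Finset.sum_congr rfl fun ω _ => by by_cases h : C ω <;> simp [h, mul_sub]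

lemma es_sum (w : Ω → ℝ) (C : Ω → Prop) {ι : Type*} (s : Finset ι) (t : ι → Ω → ℝ) :
    es w C (fun ω => ∑ i ∈ s, t i ω) = ∑ i ∈ s, es w C (t i) := by
  unfold es
  rw [Finset.sum_comm]
  exact Finset.sum_congr rfl fun ω _ => by
    by_cases h : C ω
    · simp [h, Finset.mul_sum]
    · simp [h]

lemma sum_fiber_eq {κ : Type*} (g : Ω → κ) (a b : Ω → ℝ)
    (h : ∀ p, (∑ ω ∈ univ.filter fun ω => g ω = p, a ω)
      = ∑ ω ∈ univ.filter fun ω => g ω = p, b ω) :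
    ∑ ω, a ω = ∑ ω, b ω := by
  classical
  rw [← Finset.sum_fiberwise_of_maps_to
      (t := Finset.univ.image g) (g := g)
      (fun x _ => Finset.mem_image_of_mem _ (Finset.mem_univ x)) a,
    ← Finset.sum_fiberwise_of_maps_to
      (t := Finset.univ.image g) (g := g)
      (fun x _ => Finset.mem_image_of_mem _ (Finset.mem_univ x)) b]
  exact Finset.sum_congr rfl fun p _ => h p

lemma es_change (w : Ω → ℝ) {κ : Type*} (g : Ω → κ) (C D : Ω → Prop) (F G : κ → ℝ)
    (h : ∀ p, F p * pr w (fun ω => C ω ∧ g ω = p) = G p * pr w (fun ω => D ω ∧ g ω = p)) :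
    es w C (fun ω => F (g ω)) = es w D (fun ω => G (g ω)) := by
  unfold es
  refine sum_fiber_eq g _ _ fun p => ?_
  rw [Finset.sum_filter, Finset.sum_filter]
  have l : ∀ (C : Ω → Prop) (F : κ → ℝ),
      (∑ ω, if g ω = p then (if C ω then w ω * F (g ω) else 0) else 0)
        = F p * pr w (fun ω => C ω ∧ g ω = p) := by
    intro C F
    unfold pr
    rw [Finset.mul_sum]
    refine Finset.sum_congr rfl fun ω _ => ?_
    by_cases hg : g ω = p
    · by_cases hc : C ω
      · simp [hg, hc, mul_comm]
      · simp [hg, hc]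
    · simp [hg]
  rw [l C F, l D G]
  exact h p

lemma es_proj (w : Ω → ℝ) (C : Ω → Prop) {κ : Type*} (g : Ω → κ) (c : κ → ℝ)
    (f : Ω → ℝ) (mm : κ → ℝ)
    (h : ∀ p, es w (fun ω => C ω ∧ g ω = p) f = mm p * pr w (fun ω => C ω ∧ g ω = p)) :
    es w C (fun ω => c (g ω) * f ω) = es w C (fun ω => c (g ω) * mm (g ω)) := by
  unfold es
  refine sum_fiber_eq g _ _ fun p => ?_
  rw [Finset.sum_filter, Finset.sum_filter]
  have l : ∀ (f : Ω → ℝ),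
      (∑ ω, if g ω = p then (if C ω then w ω * (c (g ω) * f ω) else 0) else 0)
        = c p * es w (fun ω => C ω ∧ g ω = p) f := by
    intro f
    unfold es
    rw [Finset.mul_sum]
    refine Finset.sum_congr rfl fun ω _ => ?_
    by_cases hg : g ω = p
    · by_cases hc : C ω
      · simp [hg, hc]; ring
      · simp [hg, hc]
    · simp [hg]
  rw [l f, l (fun ω => mm (g ω))]
  have hr : es w (fun ω => C ω ∧ g ω = p) (fun ω => mm (g ω))
      = mm p * pr w (fun ω => C ω ∧ g ω = p) := by
    unfold es pr
    rw [Finset.mul_sum]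
    refine Finset.sum_congr rfl fun ω _ => ?_
    by_cases hcg : C ω ∧ g ω = p
    · simp [hcg, hcg.2, mul_comm]
    · simp [hcg]
  rw [hr, h p]

end Aux

/-- **Robustness of the one-step functional to the missingness
propensity.** In the capture-recapture setup, assume MAR and positivity, and let
`π̄(y,v) > 0` be an arbitrary candidate missingness propensity. Taking the candidate
conditional probabilities equal to the truth, with
`1/γ(v,x) = 1 + Π_{y ≠ 0} q_y(v,x)^{(−1)^{|y|+1}}` (denoted `gi`),
`m(v) = E_Q[ 1/γ(V,X) − 1 | V=v ]`, and `φ̃` the uncentered one-step functional, it holds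
that `E_Q[ φ̃(Y,V,X,R) ] = E_Q[ 1/γ(V,X) − 1 ]`, regardless of the choice of `π̄`. -/
theorem one_step_robust_to_propensity
    {Ω 𝒱 𝒳 : Type*} [Fintype Ω] {K : ℕ} (hK : 1 ≤ K)
    (w : Ω → ℝ) (Y : Ω → Finset (Fin K)) (V : Ω → 𝒱) (X : Ω → 𝒳) (R : Ω → Bool)
    (hw0 : ∀ ω, 0 ≤ w ω) (hw1 : ∑ ω, w ω = 1)
    (hψ : 0 < pr w (fun ω => Y ω ≠ ∅))
    -- MAR: X and R are conditionally independent given (V, Y) under Q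
    (hMAR : ∀ (y : Finset (Fin K)) (v : 𝒱) (x : 𝒳) (r : Bool),
      0 < pr w (fun ω => Y ω = y ∧ V ω = v ∧ Y ω ≠ ∅) →
      cpr w (fun ω => X ω = x ∧ R ω = r) (fun ω => Y ω = y ∧ V ω = v ∧ Y ω ≠ ∅)
        = cpr w (fun ω => X ω = x) (fun ω => Y ω = y ∧ V ω = v ∧ Y ω ≠ ∅)
          * cpr w (fun ω => R ω = r) (fun ω => Y ω = y ∧ V ω = v ∧ Y ω ≠ ∅))
    -- positivity of the true nuisance functions on the support
    (hpos : ∀ y : Finset (Fin K), y ≠ ∅ → ∀ (v : 𝒱) (x : 𝒳),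
      0 < pr w (fun ω => V ω = v ∧ X ω = x ∧ Y ω ≠ ∅) →
      0 < qfull w Y V X y v x ∧ 0 < qV w Y V y v ∧ 0 < piR w Y V R y v)
    -- arbitrary candidate missingness propensity, positive on the support
    (pib : Finset (Fin K) → 𝒱 → ℝ)
    (hpibpos : ∀ y : Finset (Fin K), y ≠ ∅ → ∀ (v : 𝒱) (x : 𝒳),
      0 < pr w (fun ω => V ω = v ∧ X ω = x ∧ Y ω ≠ ∅) → 0 < pib y v)
    -- gi v x = 1/γ(v,x) = 1 + Π_{y ≠ 0} q_y(v,x)^{(−1)^{|y|+1}}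
    (gi : 𝒱 → 𝒳 → ℝ)
    (hgi : ∀ (v : 𝒱) (x : 𝒳), gi v x
      = 1 + ∏ y ∈ Finset.univ.filter (fun y : Finset (Fin K) => y ≠ ∅),
          qfull w Y V X y v x ^ ((-1 : ℤ) ^ (y.card + 1)))
    -- m(v) = E_Q[1/γ(V,X) − 1 | V = v]
    (m : 𝒱 → ℝ)
    (hm : ∀ v : 𝒱, m v
      = cexp w (fun ω => gi (V ω) (X ω) - 1) (fun ω => V ω = v ∧ Y ω ≠ ∅))
    -- the uncentered one-step functional φ̃ with true conditional probabilities and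
    -- candidate propensity π̄
    (φt : Finset (Fin K) → 𝒱 → 𝒳 → Bool → ℝ)
    (hφt : ∀ (y : Finset (Fin K)) (v : 𝒱) (x : 𝒳) (r : Bool), φt y v x r
      = ∑ y' ∈ Finset.univ.filter (fun y' : Finset (Fin K) => y' ≠ ∅),
          (-1 : ℝ) ^ (1 + y'.card) *
            (((if r = true then (1 : ℝ) else 0) * (if y = y' then (1 : ℝ) else 0))
                / pib y' v *
              ((1 / qfull w Y V X y' v x) * (gi v x - 1)
                - (1 / qV w Y V y' v) * m v)
            + (if y = y' then (1 : ℝ) else 0) / qV w Y V y' v * m v)) :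
    cexp w (fun ω => φt (Y ω) (V ω) (X ω) (R ω)) (fun ω => Y ω ≠ ∅)
      = cexp w (fun ω => gi (V ω) (X ω) - 1) (fun ω => Y ω ≠ ∅) := by
  
  classical
  suffices h : es w (fun ω => Y ω ≠ ∅) (fun ω => φt (Y ω) (V ω) (X ω) (R ω))
      = es w (fun ω => Y ω ≠ ∅) (fun ω => gi (V ω) (X ω) - 1) by
    simp only [cexp, es] at h ⊢
    rw [h]
  have hwpos : ∀ ω, w ω ≠ 0 → 0 < w ω := fun ω h => lt_of_le_of_ne (hw0 ω) (Ne.symm h)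
  have hsupp : ∀ ω, w ω ≠ 0 → Y ω ≠ ∅ →
      0 < pr w (fun ω' => V ω' = V ω ∧ X ω' = X ω ∧ Y ω' ≠ ∅) :=
    fun ω hw hy => lt_of_lt_of_le (hwpos ω hw) (le_pr hw0 ⟨rfl, rfl, hy⟩)
  -- the m fiber identity
  have hmfiber : ∀ v, es w (fun ω => Y ω ≠ ∅ ∧ V ω = v) (fun ω => gi (V ω) (X ω) - 1)
      = m v * pr w (fun ω => Y ω ≠ ∅ ∧ V ω = v) := by
    intro v
    have hesc : es w (fun ω => Y ω ≠ ∅ ∧ V ω = v) (fun ω => gi (V ω) (X ω) - 1)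
        = es w (fun ω => V ω = v ∧ Y ω ≠ ∅) (fun ω => gi (V ω) (X ω) - 1) :=
      es_ext w (fun ω _ => by
        by_cases h1 : Y ω ≠ ∅ <;> by_cases h2 : V ω = v <;> simp [h1, h2])
    have hprc : pr w (fun ω => Y ω ≠ ∅ ∧ V ω = v) = pr w (fun ω => V ω = v ∧ Y ω ≠ ∅) :=
      pr_congr fun ω => and_comm
    by_cases hd : pr w (fun ω => V ω = v ∧ Y ω ≠ ∅) = 0
    · rw [hesc, hprc, hd, mul_zero]
      exact es_zero hw0 hd _
    · rw [hesc, hprc, hm v]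
      simp only [cexp, es]
      rw [div_mul_cancel₀ _ hd]
  -- MV = M
  have hMV : es w (fun ω => Y ω ≠ ∅) (fun ω => m (V ω))
      = es w (fun ω => Y ω ≠ ∅) (fun ω => gi (V ω) (X ω) - 1) := by
    have h1 : es w (fun ω => Y ω ≠ ∅) (fun ω => (1 : ℝ) * (gi (V ω) (X ω) - 1))
        = es w (fun ω => Y ω ≠ ∅) (fun ω => (1 : ℝ) * m (V ω)) :=
      es_proj w (fun ω => Y ω ≠ ∅) V (fun _ => (1 : ℝ)) _ m (fun v => hmfiber v)
    calc es w (fun ω => Y ω ≠ ∅) (fun ω => m (V ω))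
        = es w (fun ω => Y ω ≠ ∅) (fun ω => (1 : ℝ) * m (V ω)) :=
          es_ext w (fun ω _ => by by_cases h : Y ω ≠ ∅ <;> simp [h])
      _ = es w (fun ω => Y ω ≠ ∅) (fun ω => (1 : ℝ) * (gi (V ω) (X ω) - 1)) := h1.symm
      _ = es w (fun ω => Y ω ≠ ∅) (fun ω => gi (V ω) (X ω) - 1) :=
          es_ext w (fun ω _ => by by_cases h : Y ω ≠ ∅ <;> simp [h])
  -- the sign sum
  have hsign : ∑ y' ∈ Finset.univ.filter (fun y' : Finset (Fin K) => y' ≠ ∅),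
      (-1 : ℝ) ^ (1 + y'.card) = 1 := by
    have hne : (Finset.univ : Finset (Fin K)).Nonempty := ⟨⟨0, hK⟩, Finset.mem_univ _⟩
    have hZ := Finset.sum_powerset_neg_one_pow_card_of_nonempty hne
    rw [Finset.powerset_univ] at hZ
    have hR : ∑ y' : Finset (Fin K), (-1 : ℝ) ^ (1 + y'.card) = 0 := by
      have hcast : ((∑ m : Finset (Fin K), (-1 : ℤ) ^ m.card : ℤ) : ℝ) = 0 := by
        rw [hZ]; norm_num
      push_cast at hcast
      calc ∑ y' : Finset (Fin K), (-1 : ℝ) ^ (1 + y'.card)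
          = ∑ y' : Finset (Fin K), (-1) * (-1 : ℝ) ^ (y'.card) :=
            Finset.sum_congr rfl fun y _ => by rw [pow_add, pow_one]
        _ = 0 := by rw [← Finset.mul_sum, hcast, mul_zero]
    have hsplit := Finset.sum_filter_add_sum_filter_not Finset.univ
      (fun y' : Finset (Fin K) => y' ≠ ∅) (fun y' => (-1 : ℝ) ^ (1 + y'.card))
    have hempty : Finset.univ.filter (fun y' : Finset (Fin K) => ¬ y' ≠ ∅) = {∅} := by
      ext y; simp
    rw [hempty, Finset.sum_singleton, hR] at hsplit
    simp only [Finset.card_empty] at hsplit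
    norm_num at hsplit
    linarith
  -- expand φt and swap sums
  have e0 : es w (fun ω => Y ω ≠ ∅) (fun ω => φt (Y ω) (V ω) (X ω) (R ω))
      = ∑ y' ∈ Finset.univ.filter (fun y' : Finset (Fin K) => y' ≠ ∅),
          es w (fun ω => Y ω ≠ ∅) (fun ω =>
            (-1 : ℝ) ^ (1 + y'.card) *
              (((if R ω = true then (1 : ℝ) else 0) * (if Y ω = y' then (1 : ℝ) else 0))
                  / pib y' (V ω) *
                ((1 / qfull w Y V X y' (V ω) (X ω)) * (gi (V ω) (X ω) - 1)
                  - (1 / qV w Y V y' (V ω)) * m (V ω))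
              + (if Y ω = y' then (1 : ℝ) else 0) / qV w Y V y' (V ω) * m (V ω))) :=
    (congrArg (es w (fun ω => Y ω ≠ ∅))
      (funext fun ω => hφt (Y ω) (V ω) (X ω) (R ω))).trans (es_sum w _ _ _)
  rw [e0]
  have key : ∀ y' ∈ Finset.univ.filter (fun y' : Finset (Fin K) => y' ≠ ∅),
      es w (fun ω => Y ω ≠ ∅) (fun ω =>
            (-1 : ℝ) ^ (1 + y'.card) *
              (((if R ω = true then (1 : ℝ) else 0) * (if Y ω = y' then (1 : ℝ) else 0))
                  / pib y' (V ω) *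
                ((1 / qfull w Y V X y' (V ω) (X ω)) * (gi (V ω) (X ω) - 1)
                  - (1 / qV w Y V y' (V ω)) * m (V ω))
              + (if Y ω = y' then (1 : ℝ) else 0) / qV w Y V y' (V ω) * m (V ω)))
        = (-1 : ℝ) ^ (1 + y'.card) * es w (fun ω => Y ω ≠ ∅) (fun ω => m (V ω)) := by
    intro y' hy'mem
    have hy' : y' ≠ ∅ := (Finset.mem_filter.mp hy'mem).2
    -- pointwise positivity
    have hqf_posω : ∀ ω, w ω ≠ 0 → Y ω ≠ ∅ → 0 < qfull w Y V X y' (V ω) (X ω) :=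
      fun ω hw hy => (hpos y' hy' _ _ (hsupp ω hw hy)).1
    have hqV_posω : ∀ ω, w ω ≠ 0 → Y ω ≠ ∅ → 0 < qV w Y V y' (V ω) :=
      fun ω hw hy => (hpos y' hy' _ (X ω) (hsupp ω hw hy)).2.1
    -- pr identities
    have hq : ∀ (v : 𝒱) (x : 𝒳),
        pr w (fun ω => Y ω = y' ∧ (V ω, X ω) = (v, x))
        = qfull w Y V X y' v x * pr w (fun ω => Y ω ≠ ∅ ∧ (V ω, X ω) = (v, x)) := by
      intro v x
      have hD2 : pr w (fun ω => Y ω ≠ ∅ ∧ (V ω, X ω) = (v, x))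
          = pr w (fun ω => V ω = v ∧ X ω = x ∧ Y ω ≠ ∅) :=
        pr_congr fun ω => by
          rw [Prod.mk.injEq]; tauto
      by_cases hD : pr w (fun ω => V ω = v ∧ X ω = x ∧ Y ω ≠ ∅) = 0
      · rw [hD2, hD, mul_zero]
        refine pr_zero_of hw0 (fun ω h => ?_) hD
        rw [Prod.mk.injEq] at h
        exact ⟨h.2.1, h.2.2, h.1 ▸ hy'⟩
      · rw [hD2]
        unfold qfull cpr
        rw [div_mul_cancel₀ _ hD]
        refine pr_congr fun ω => ?_
        rw [Prod.mk.injEq]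
        constructor
        · rintro ⟨h1, h2, h3⟩; exact ⟨h1, h2, h3, h1 ▸ hy'⟩
        · rintro ⟨h1, h2, h3, _⟩; exact ⟨h1, h2, h3⟩
    have hqV : ∀ v : 𝒱,
        pr w (fun ω => Y ω = y' ∧ V ω = v)
        = qV w Y V y' v * pr w (fun ω => Y ω ≠ ∅ ∧ V ω = v) := by
      intro v
      have hD2 : pr w (fun ω => Y ω ≠ ∅ ∧ V ω = v)
          = pr w (fun ω => V ω = v ∧ Y ω ≠ ∅) := pr_congr fun ω => and_comm
      by_cases hD : pr w (fun ω => V ω = v ∧ Y ω ≠ ∅) = 0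
      · rw [hD2, hD, mul_zero]
        exact pr_zero_of hw0 (fun ω h => ⟨h.2, h.1 ▸ hy'⟩) hD
      · rw [hD2]
        unfold qV cpr
        rw [div_mul_cancel₀ _ hD]
        refine pr_congr fun ω => ?_
        constructor
        · rintro ⟨h1, h2⟩; exact ⟨h1, h2, h1 ▸ hy'⟩
        · rintro ⟨h1, h2, _⟩; exact ⟨h1, h2⟩
    have hπ : ∀ (v : 𝒱) (x : 𝒳),
        pr w (fun ω => (Y ω = y' ∧ R ω = true) ∧ (V ω, X ω) = (v, x))
        = piR w Y V R y' v * pr w (fun ω => Y ω = y' ∧ (V ω, X ω) = (v, x)) := by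
      intro v x
      by_cases hB : pr w (fun ω => Y ω = y' ∧ V ω = v ∧ Y ω ≠ ∅) = 0
      · have h1 : pr w (fun ω => (Y ω = y' ∧ R ω = true) ∧ (V ω, X ω) = (v, x)) = 0 :=
          pr_zero_of hw0 (fun ω h => by
            rw [Prod.mk.injEq] at h
            exact ⟨h.1.1, h.2.1, h.1.1 ▸ hy'⟩) hB
        have h2 : pr w (fun ω => Y ω = y' ∧ (V ω, X ω) = (v, x)) = 0 :=
          pr_zero_of hw0 (fun ω h => by
            rw [Prod.mk.injEq] at h
            exact ⟨h.1, h.2.1, h.1 ▸ hy'⟩) hB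
        rw [h1, h2, mul_zero]
      · have hBpos : 0 < pr w (fun ω => Y ω = y' ∧ V ω = v ∧ Y ω ≠ ∅) :=
          lt_of_le_of_ne (pr_nonneg hw0) (Ne.symm hB)
        have hmar := hMAR y' v x true hBpos
        have h1 := pr_and_eq (w := w) (A := fun ω => X ω = x ∧ R ω = true)
          (B := fun ω => Y ω = y' ∧ V ω = v ∧ Y ω ≠ ∅) hw0
        have h2 := pr_and_eq (w := w) (A := fun ω => X ω = x)
          (B := fun ω => Y ω = y' ∧ V ω = v ∧ Y ω ≠ ∅) hw0
        calc pr w (fun ω => (Y ω = y' ∧ R ω = true) ∧ (V ω, X ω) = (v, x))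
            = pr w (fun ω => (X ω = x ∧ R ω = true) ∧ (Y ω = y' ∧ V ω = v ∧ Y ω ≠ ∅)) := by
              refine pr_congr fun ω => ?_
              rw [Prod.mk.injEq]
              constructor
              · rintro ⟨⟨a1, a2⟩, a3, a4⟩; exact ⟨⟨a4, a2⟩, a1, a3, a1 ▸ hy'⟩
              · rintro ⟨⟨a1, a2⟩, a3, a4, _⟩; exact ⟨⟨a3, a2⟩, a4, a1⟩
          _ = cpr w (fun ω => X ω = x ∧ R ω = true)
                (fun ω => Y ω = y' ∧ V ω = v ∧ Y ω ≠ ∅)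
                * pr w (fun ω => Y ω = y' ∧ V ω = v ∧ Y ω ≠ ∅) := h1
          _ = cpr w (fun ω => R ω = true) (fun ω => Y ω = y' ∧ V ω = v ∧ Y ω ≠ ∅)
                * (cpr w (fun ω => X ω = x) (fun ω => Y ω = y' ∧ V ω = v ∧ Y ω ≠ ∅)
                  * pr w (fun ω => Y ω = y' ∧ V ω = v ∧ Y ω ≠ ∅)) := by
              rw [hmar]; ring
          _ = piR w Y V R y' v
                * pr w (fun ω => (X ω = x) ∧ (Y ω = y' ∧ V ω = v ∧ Y ω ≠ ∅)) := by
              rw [← h2]; rfl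
          _ = piR w Y V R y' v * pr w (fun ω => Y ω = y' ∧ (V ω, X ω) = (v, x)) := by
              congr 1
              refine pr_congr fun ω => ?_
              rw [Prod.mk.injEq]
              constructor
              · rintro ⟨a1, a2, a3, _⟩; exact ⟨a2, a3, a1⟩
              · rintro ⟨a1, a2, a3⟩; exact ⟨a3, a1, a2, a1 ▸ hy'⟩
    -- split the body
    have esplit : es w (fun ω => Y ω ≠ ∅) (fun ω =>
            (-1 : ℝ) ^ (1 + y'.card) *
              (((if R ω = true then (1 : ℝ) else 0) * (if Y ω = y' then (1 : ℝ) else 0))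
                  / pib y' (V ω) *
                ((1 / qfull w Y V X y' (V ω) (X ω)) * (gi (V ω) (X ω) - 1)
                  - (1 / qV w Y V y' (V ω)) * m (V ω))
              + (if Y ω = y' then (1 : ℝ) else 0) / qV w Y V y' (V ω) * m (V ω)))
        = (-1 : ℝ) ^ (1 + y'.card) *
            (es w (fun ω => Y ω ≠ ∅) (fun ω =>
              ((if R ω = true then (1 : ℝ) else 0) * (if Y ω = y' then (1 : ℝ) else 0))
                  / pib y' (V ω) *
                ((1 / qfull w Y V X y' (V ω) (X ω)) * (gi (V ω) (X ω) - 1)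
                  - (1 / qV w Y V y' (V ω)) * m (V ω)))
            + es w (fun ω => Y ω ≠ ∅) (fun ω =>
              (if Y ω = y' then (1 : ℝ) else 0) / qV w Y V y' (V ω) * m (V ω))) := by
      rw [es_smul, es_add]
    rw [esplit]
    -- the A term
    have hTA : es w (fun ω => Y ω ≠ ∅) (fun ω =>
              ((if R ω = true then (1 : ℝ) else 0) * (if Y ω = y' then (1 : ℝ) else 0))
                  / pib y' (V ω) *
                ((1 / qfull w Y V X y' (V ω) (X ω)) * (gi (V ω) (X ω) - 1)
                  - (1 / qV w Y V y' (V ω)) * m (V ω))) = 0 := by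
      have s0 : es w (fun ω => Y ω ≠ ∅) (fun ω =>
              ((if R ω = true then (1 : ℝ) else 0) * (if Y ω = y' then (1 : ℝ) else 0))
                  / pib y' (V ω) *
                ((1 / qfull w Y V X y' (V ω) (X ω)) * (gi (V ω) (X ω) - 1)
                  - (1 / qV w Y V y' (V ω)) * m (V ω)))
          = es w (fun ω => Y ω = y' ∧ R ω = true) (fun ω =>
              (1 / pib y' (V ω)) *
                ((1 / qfull w Y V X y' (V ω) (X ω)) * (gi (V ω) (X ω) - 1)
                  - (1 / qV w Y V y' (V ω)) * m (V ω))) := by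
        refine es_ext w fun ω _ => ?_
        by_cases hY : Y ω = y'
        · have hne : Y ω ≠ ∅ := hY ▸ hy'
          by_cases hR : R ω = true
          · rw [if_pos hne, if_pos (show Y ω = y' ∧ R ω = true from ⟨hY, hR⟩),
              if_pos hR, if_pos hY]
            ring
          · simp [hY, hR, hne]
        · by_cases hne : Y ω ≠ ∅ <;> simp [hY, hne]
      have s1 : es w (fun ω => Y ω = y' ∧ R ω = true) (fun ω =>
              (1 / pib y' (V ω)) *
                ((1 / qfull w Y V X y' (V ω) (X ω)) * (gi (V ω) (X ω) - 1)
                  - (1 / qV w Y V y' (V ω)) * m (V ω)))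
          = es w (fun ω => Y ω = y') (fun ω =>
              (piR w Y V R y' (V ω) / pib y' (V ω)) *
                ((1 / qfull w Y V X y' (V ω) (X ω)) * (gi (V ω) (X ω) - 1)
                  - (1 / qV w Y V y' (V ω)) * m (V ω))) := by
        refine es_change w (fun ω => (V ω, X ω)) _ _
          (fun p => (1 / pib y' p.1) *
            ((1 / qfull w Y V X y' p.1 p.2) * (gi p.1 p.2 - 1)
              - (1 / qV w Y V y' p.1) * m p.1))
          (fun p => (piR w Y V R y' p.1 / pib y' p.1) *
            ((1 / qfull w Y V X y' p.1 p.2) * (gi p.1 p.2 - 1)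
              - (1 / qV w Y V y' p.1) * m p.1))
          fun p => ?_
        obtain ⟨v, x⟩ := p
        rw [hπ v x]
        ring
      have s2 : es w (fun ω => Y ω = y') (fun ω =>
              (piR w Y V R y' (V ω) / pib y' (V ω)) *
                ((1 / qfull w Y V X y' (V ω) (X ω)) * (gi (V ω) (X ω) - 1)
                  - (1 / qV w Y V y' (V ω)) * m (V ω)))
          = es w (fun ω => Y ω ≠ ∅) (fun ω =>
              qfull w Y V X y' (V ω) (X ω) *
                ((piR w Y V R y' (V ω) / pib y' (V ω)) *
                  ((1 / qfull w Y V X y' (V ω) (X ω)) * (gi (V ω) (X ω) - 1)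
                    - (1 / qV w Y V y' (V ω)) * m (V ω)))) := by
        refine es_change w (fun ω => (V ω, X ω)) _ _
          (fun p => (piR w Y V R y' p.1 / pib y' p.1) *
            ((1 / qfull w Y V X y' p.1 p.2) * (gi p.1 p.2 - 1)
              - (1 / qV w Y V y' p.1) * m p.1))
          (fun p => qfull w Y V X y' p.1 p.2 *
            ((piR w Y V R y' p.1 / pib y' p.1) *
              ((1 / qfull w Y V X y' p.1 p.2) * (gi p.1 p.2 - 1)
                - (1 / qV w Y V y' p.1) * m p.1)))
          fun p => ?_
        obtain ⟨v, x⟩ := p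
        rw [hq v x]
        ring
      have s3 : es w (fun ω => Y ω ≠ ∅) (fun ω =>
              qfull w Y V X y' (V ω) (X ω) *
                ((piR w Y V R y' (V ω) / pib y' (V ω)) *
                  ((1 / qfull w Y V X y' (V ω) (X ω)) * (gi (V ω) (X ω) - 1)
                    - (1 / qV w Y V y' (V ω)) * m (V ω))))
          = es w (fun ω => Y ω ≠ ∅) (fun ω =>
              (piR w Y V R y' (V ω) / pib y' (V ω)) * (gi (V ω) (X ω) - 1)
              - (piR w Y V R y' (V ω) * m (V ω) / (pib y' (V ω) * qV w Y V y' (V ω))) *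
                  qfull w Y V X y' (V ω) (X ω)) := by
        refine es_ext w fun ω hw => ?_
        by_cases hne : Y ω ≠ ∅
        · rw [if_pos hne, if_pos hne]
          have hq0 : qfull w Y V X y' (V ω) (X ω) ≠ 0 := ne_of_gt (hqf_posω ω hw hne)
          have hqV0 : qV w Y V y' (V ω) ≠ 0 := ne_of_gt (hqV_posω ω hw hne)
          have hpib0 : pib y' (V ω) ≠ 0 :=
            ne_of_gt (hpibpos y' hy' _ (X ω) (hsupp ω hw hne))
          field_simp
        · simp [hne]
      have s4 : es w (fun ω => Y ω ≠ ∅) (fun ω =>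
              (piR w Y V R y' (V ω) / pib y' (V ω)) * (gi (V ω) (X ω) - 1)
              - (piR w Y V R y' (V ω) * m (V ω) / (pib y' (V ω) * qV w Y V y' (V ω))) *
                  qfull w Y V X y' (V ω) (X ω))
          = es w (fun ω => Y ω ≠ ∅) (fun ω =>
              (piR w Y V R y' (V ω) / pib y' (V ω)) * (gi (V ω) (X ω) - 1))
            - es w (fun ω => Y ω ≠ ∅) (fun ω =>
              (piR w Y V R y' (V ω) * m (V ω) / (pib y' (V ω) * qV w Y V y' (V ω))) *
                  qfull w Y V X y' (V ω) (X ω)) := by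
        exact es_sub w _ _ _
      -- first piece equals the common value
      have t1 : es w (fun ω => Y ω ≠ ∅) (fun ω =>
              (piR w Y V R y' (V ω) / pib y' (V ω)) * (gi (V ω) (X ω) - 1))
          = es w (fun ω => Y ω ≠ ∅) (fun ω =>
              (piR w Y V R y' (V ω) / pib y' (V ω)) * m (V ω)) :=
        es_proj w (fun ω => Y ω ≠ ∅) V
          (fun v => piR w Y V R y' v / pib y' v) _ m (fun v => hmfiber v)
      -- second piece also equals the common value
      have t2 : es w (fun ω => Y ω ≠ ∅) (fun ω =>
              (piR w Y V R y' (V ω) * m (V ω) / (pib y' (V ω) * qV w Y V y' (V ω))) *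
                  qfull w Y V X y' (V ω) (X ω))
          = es w (fun ω => Y ω ≠ ∅) (fun ω =>
              (piR w Y V R y' (V ω) / pib y' (V ω)) * m (V ω)) := by
        have u1 : es w (fun ω => Y ω ≠ ∅) (fun ω =>
                (piR w Y V R y' (V ω) * m (V ω) / (pib y' (V ω) * qV w Y V y' (V ω))) *
                    qfull w Y V X y' (V ω) (X ω))
            = es w (fun ω => Y ω = y') (fun ω =>
                piR w Y V R y' (V ω) * m (V ω) / (pib y' (V ω) * qV w Y V y' (V ω))) := by
          refine es_change w (fun ω => (V ω, X ω)) _ _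
            (fun p => (piR w Y V R y' p.1 * m p.1 / (pib y' p.1 * qV w Y V y' p.1)) *
              qfull w Y V X y' p.1 p.2)
            (fun p => piR w Y V R y' p.1 * m p.1 / (pib y' p.1 * qV w Y V y' p.1))
            fun p => ?_
          obtain ⟨v, x⟩ := p
          rw [hq v x]
          ring
        have u2 : es w (fun ω => Y ω = y') (fun ω =>
                piR w Y V R y' (V ω) * m (V ω) / (pib y' (V ω) * qV w Y V y' (V ω)))
            = es w (fun ω => Y ω ≠ ∅) (fun ω =>
                qV w Y V y' (V ω) *
                  (piR w Y V R y' (V ω) * m (V ω) / (pib y' (V ω) * qV w Y V y' (V ω)))) := by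
          refine es_change w V _ _
            (fun v => piR w Y V R y' v * m v / (pib y' v * qV w Y V y' v))
            (fun v => qV w Y V y' v *
              (piR w Y V R y' v * m v / (pib y' v * qV w Y V y' v)))
            fun v => ?_
          rw [hqV v]
          ring
        have u3 : es w (fun ω => Y ω ≠ ∅) (fun ω =>
                qV w Y V y' (V ω) *
                  (piR w Y V R y' (V ω) * m (V ω) / (pib y' (V ω) * qV w Y V y' (V ω))))
            = es w (fun ω => Y ω ≠ ∅) (fun ω =>
                (piR w Y V R y' (V ω) / pib y' (V ω)) * m (V ω)) := by
          refine es_ext w fun ω hw => ?_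
          by_cases hne : Y ω ≠ ∅
          · rw [if_pos hne, if_pos hne]
            have hqV0 : qV w Y V y' (V ω) ≠ 0 := ne_of_gt (hqV_posω ω hw hne)
            have hpib0 : pib y' (V ω) ≠ 0 :=
              ne_of_gt (hpibpos y' hy' _ (X ω) (hsupp ω hw hne))
            field_simp
          · simp [hne]
        rw [u1, u2, u3]
      rw [s0, s1, s2, s3, s4, t1, t2, sub_self]
    -- the B term
    have hTB : es w (fun ω => Y ω ≠ ∅) (fun ω =>
              (if Y ω = y' then (1 : ℝ) else 0) / qV w Y V y' (V ω) * m (V ω))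
        = es w (fun ω => Y ω ≠ ∅) (fun ω => m (V ω)) := by
      have b0 : es w (fun ω => Y ω ≠ ∅) (fun ω =>
              (if Y ω = y' then (1 : ℝ) else 0) / qV w Y V y' (V ω) * m (V ω))
          = es w (fun ω => Y ω = y') (fun ω =>
              1 / qV w Y V y' (V ω) * m (V ω)) := by
        refine es_ext w fun ω _ => ?_
        by_cases hY : Y ω = y'
        · have hne : Y ω ≠ ∅ := hY ▸ hy'
          simp [hY, hne, hy']
        · by_cases hne : Y ω ≠ ∅ <;> simp [hY, hne]
      have b1 : es w (fun ω => Y ω = y') (fun ω =>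
              1 / qV w Y V y' (V ω) * m (V ω))
          = es w (fun ω => Y ω ≠ ∅) (fun ω =>
              qV w Y V y' (V ω) * (1 / qV w Y V y' (V ω) * m (V ω))) := by
        refine es_change w V _ _
          (fun v => 1 / qV w Y V y' v * m v)
          (fun v => qV w Y V y' v * (1 / qV w Y V y' v * m v))
          fun v => ?_
        rw [hqV v]
        ring
      have b2 : es w (fun ω => Y ω ≠ ∅) (fun ω =>
              qV w Y V y' (V ω) * (1 / qV w Y V y' (V ω) * m (V ω)))
          = es w (fun ω => Y ω ≠ ∅) (fun ω => m (V ω)) := by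
        refine es_ext w fun ω hw => ?_
        by_cases hne : Y ω ≠ ∅
        · rw [if_pos hne, if_pos hne]
          have hqV0 : qV w Y V y' (V ω) ≠ 0 := ne_of_gt (hqV_posω ω hw hne)
          field_simp
        · simp [hne]
      rw [b0, b1, b2]
    rw [hTA, hTB, zero_add]
  calc ∑ y' ∈ Finset.univ.filter (fun y' : Finset (Fin K) => y' ≠ ∅),
          es w (fun ω => Y ω ≠ ∅) (fun ω =>
            (-1 : ℝ) ^ (1 + y'.card) *
              (((if R ω = true then (1 : ℝ) else 0) * (if Y ω = y' then (1 : ℝ) else 0))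
                  / pib y' (V ω) *
                ((1 / qfull w Y V X y' (V ω) (X ω)) * (gi (V ω) (X ω) - 1)
                  - (1 / qV w Y V y' (V ω)) * m (V ω))
              + (if Y ω = y' then (1 : ℝ) else 0) / qV w Y V y' (V ω) * m (V ω)))
      = ∑ y' ∈ Finset.univ.filter (fun y' : Finset (Fin K) => y' ≠ ∅),
          (-1 : ℝ) ^ (1 + y'.card) * es w (fun ω => Y ω ≠ ∅) (fun ω => m (V ω)) :=
        Finset.sum_congr rfl key
    _ = (∑ y' ∈ Finset.univ.filter (fun y' : Finset (Fin K) => y' ≠ ∅),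
          (-1 : ℝ) ^ (1 + y'.card)) * es w (fun ω => Y ω ≠ ∅) (fun ω => m (V ω)) := by
        rw [Finset.sum_mul]
    _ = es w (fun ω => Y ω ≠ ∅) (fun ω => m (V ω)) := by rw [hsign, one_mul]
    _ = es w (fun ω => Y ω ≠ ∅) (fun ω => gi (V ω) (X ω) - 1) := hMV
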